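/- Let P₀ = N(0, Σ₀) and P₁ = N(0, Σ₁) be trivariate centered Gaussians with Σ₀ having unit variances, ρ₁₂ = 0, and correlations ρ₁₃, ρ₂₃, and Σ₁ identical except ρ₁₂ replaced by ρ₁₃ρ₂₃. Then the squared Hellinger distance satisfies H²(P₀, P₁) = 1 - |Σ₀|^{1/4}|Σ₁|^{1/4}/|((Σ₀+Σ₁)/2)|^{1/2}, and as ρ₁₃, ρ₂₃ → 0, H²(P₀, P₁) = ρ₁₃²ρ₂₃²/8 + O(ρ₁₃⁴ + ρ₂₃⁴). -/

import Mathlib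

open MeasureTheory Matrix Real

/-- Density of the centered trivariate Gaussian `N(0, A)` with respect to Lebesgue
measure on `ℝ³`. -/
noncomputable def gaussDensity3 (A : Matrix (Fin 3) (Fin 3) ℝ) (x : Fin 3 → ℝ) : ℝ :=
  (Real.sqrt ((2 * π) ^ 3 * A.det))⁻¹ *
    Real.exp (-(∑ i, ∑ j, x i * A⁻¹ i j * x j) / 2)

/-- Squared Hellinger distance between two centered trivariate Gaussians. -/
noncomputable def hellingerSqGauss3 (A B : Matrix (Fin 3) (Fin 3) ℝ) : ℝ :=
  (1 / 2) * ∫ x : Fin 3 → ℝ,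
    (Real.sqrt (gaussDensity3 A x) - Real.sqrt (gaussDensity3 B x)) ^ 2

/-- The correlation matrix of `Σ₀` (marginal independence: `ρ₁₂ = 0`). -/
noncomputable def corr0 (ρ₁₃ ρ₂₃ : ℝ) : Matrix (Fin 3) (Fin 3) ℝ :=
  !![1, 0, ρ₁₃; 0, 1, ρ₂₃; ρ₁₃, ρ₂₃, 1]

/-- The correlation matrix of `Σ₁` (conditional independence: `ρ₁₂ = ρ₁₃ρ₂₃`). -/
noncomputable def corr1 (ρ₁₃ ρ₂₃ : ℝ) : Matrix (Fin 3) (Fin 3) ℝ :=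
  !![1, ρ₁₃ * ρ₂₃, ρ₁₃; ρ₁₃ * ρ₂₃, 1, ρ₂₃; ρ₁₃, ρ₂₃, 1]

lemma quad_sum_eq (M : Matrix (Fin 3) (Fin 3) ℝ) (x : Fin 3 → ℝ) :
    ∑ i, ∑ j, x i * M i j * x j = x ⬝ᵥ M *ᵥ x := by
  simp only [dotProduct, Matrix.mulVec, Finset.mul_sum]
  exact Finset.sum_congr rfl fun i _ => Finset.sum_congr rfl fun j _ => by ring

lemma posDef_smul_pos {M : Matrix (Fin 3) (Fin 3) ℝ} (hM : M.PosDef) {c : ℝ} (hc : 0 < c) :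
    (c • M).PosDef := by
  refine posDef_iff_dotProduct_mulVec.mpr ⟨?_, fun x hx => ?_⟩
  · have h := hM.1
    rw [Matrix.IsHermitian, Matrix.conjTranspose_smul, h, star_trivial]
  · rw [Matrix.smul_mulVec]
    have := hM.dotProduct_mulVec_pos hx
    simp only [dotProduct_smul, smul_eq_mul]
    exact mul_pos hc this

open scoped MatrixOrder in
lemma gauss3 {Q : Matrix (Fin 3) (Fin 3) ℝ} (hQ : Q.PosDef) :
    Integrable (fun x : Fin 3 → ℝ => Real.exp (-(x ⬝ᵥ Q *ᵥ x) / 2)) ∧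
    ∫ x : Fin 3 → ℝ, Real.exp (-(x ⬝ᵥ Q *ᵥ x) / 2) = Real.sqrt ((2 * π) ^ 3 / Q.det) := by
  classical
  set S := CFC.sqrt Q with hSdef
  have hSpsd : S.PosSemidef := Matrix.nonneg_iff_posSemidef.mp (CFC.sqrt_nonneg Q)
  have hSS : S * S = Q := CFC.sqrt_mul_sqrt_self Q (Matrix.nonneg_iff_posSemidef.mpr hQ.posSemidef)
  have hdet2 : S.det * S.det = Q.det := by rw [← Matrix.det_mul, hSS]
  have hQdet : 0 < Q.det := hQ.det_pos
  have hdet_nonneg : 0 ≤ S.det := by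
    exact hSpsd.det_nonneg
  have hdetS : 0 < S.det := by
    rcases hdet_nonneg.lt_or_eq with h | h
    · exact h
    · exfalso; rw [← h, mul_zero] at hdet2; exact hQdet.ne' hdet2.symm
  have hne : S.det ≠ 0 := hdetS.ne'
  have hST : Sᵀ = S := by
    have h := hSpsd.1
    rwa [Matrix.IsHermitian, Matrix.conjTranspose_eq_transpose_of_trivial] at h
  have hq : ∀ x : Fin 3 → ℝ, x ⬝ᵥ Q *ᵥ x = ∑ i, (S *ᵥ x) i ^ 2 := by
    intro x
    rw [← hSS, ← Matrix.mulVec_mulVec, Matrix.dotProduct_mulVec, ← Matrix.mulVec_transpose, hST]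
    simp [dotProduct, pow_two]
  set g : (Fin 3 → ℝ) → ℝ := fun y => ∏ i, Real.exp (-(1/2 : ℝ) * y i ^ 2) with hg
  have hgcont : Continuous g := by
    apply continuous_finset_prod
    intro i _
    exact Real.continuous_exp.comp (by fun_prop)
  have key : (fun x : Fin 3 → ℝ => Real.exp (-(x ⬝ᵥ Q *ᵥ x) / 2))
      = g ∘ (Matrix.toLin' S) := by
    funext x
    simp only [Function.comp_apply, Matrix.toLin'_apply, hg, ← Real.exp_sum, hq x]
    congr 1
    simp only [Fin.sum_univ_three]
    ring
  have hgi : Integrable g := by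
    exact Integrable.fintype_prod (f := fun (_ : Fin 3) (t : ℝ) => Real.exp (-(1/2 : ℝ) * t ^ 2))
      (fun i => integrable_exp_neg_mul_sq (by norm_num))
  have hmeas : Measurable (Matrix.toLin' S) := (LinearMap.continuous_on_pi _).measurable
  have hmap := Real.map_matrix_volume_pi_eq_smul_volume_pi (M := S) hne
  have h1 : Integrable g (Measure.map (Matrix.toLin' S) volume) := by
    rw [hmap]
    exact hgi.smul_measure ENNReal.ofReal_ne_top
  have hint : Integrable (g ∘ Matrix.toLin' S) :=
    (integrable_map_measure hgcont.aestronglyMeasurable hmeas.aemeasurable).mp h1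
  have hgval : ∫ y : Fin 3 → ℝ, g y = Real.sqrt (2 * π) ^ 3 := by
    have hhalf : π / (1/2 : ℝ) = 2 * π := by ring
    rw [hg, MeasureTheory.integral_fintype_prod_volume_eq_pow (ι := Fin 3)
      (fun t : ℝ => Real.exp (-(1/2 : ℝ) * t ^ 2)), integral_gaussian, hhalf, Fintype.card_fin]
  have hIval : ∫ x : Fin 3 → ℝ, Real.exp (-(x ⬝ᵥ Q *ᵥ x) / 2)
      = (S.det)⁻¹ * (Real.sqrt (2 * π) ^ 3) := by
    rw [key]
    have : ∫ x : Fin 3 → ℝ, (g ∘ Matrix.toLin' S) x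
        = ∫ y, g y ∂(Measure.map (Matrix.toLin' S) volume) := by
      rw [integral_map hmeas.aemeasurable hgcont.aestronglyMeasurable]
      rfl
    rw [this, hmap, integral_smul_measure, hgval,
      ENNReal.toReal_ofReal (abs_nonneg _), abs_of_pos (inv_pos.mpr hdetS), smul_eq_mul]
  constructor
  · rw [key]; exact hint
  · rw [hIval]
    have h2π : (0:ℝ) ≤ 2 * π := by positivity
    have hs1 : Real.sqrt ((2*π)^3) = Real.sqrt (2*π)^3 := by
      rw [show ((2:ℝ)*π)^3 = (2*π)^2*(2*π) by ring, Real.sqrt_mul (by positivity),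
        Real.sqrt_sq h2π, show Real.sqrt (2*π)^3 = Real.sqrt (2*π)^2 * Real.sqrt (2*π) by ring,
        Real.sq_sqrt h2π]
    rw [Real.sqrt_div (by positivity : (0:ℝ) ≤ (2*π)^3) Q.det, hs1, ← hdet2,
      Real.sqrt_mul_self hdet_nonneg, inv_mul_eq_div]


lemma quad_smul_half (M : Matrix (Fin 3) (Fin 3) ℝ) (x : Fin 3 → ℝ) :
    x ⬝ᵥ ((1/2 : ℝ) • M) *ᵥ x = (1/2) * (x ⬝ᵥ M *ᵥ x) := by
  rw [Matrix.smul_mulVec, dotProduct_smul, smul_eq_mul]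

lemma hellinger_formula {A B : Matrix (Fin 3) (Fin 3) ℝ} (hA : A.PosDef) (hB : B.PosDef) :
    hellingerSqGauss3 A B
      = 1 - A.det ^ ((1 : ℝ) / 4) * B.det ^ ((1 : ℝ) / 4)
          / Real.sqrt (((1 / 2 : ℝ) • (A + B)).det) := by
  have hdA : 0 < A.det := hA.det_pos
  have hdB : 0 < B.det := hB.det_pos
  have hAu : IsUnit A.det := isUnit_iff_ne_zero.mpr hdA.ne'
  have hBu : IsUnit B.det := isUnit_iff_ne_zero.mpr hdB.ne'
  set cA : ℝ := (Real.sqrt ((2 * π) ^ 3 * A.det))⁻¹ with hcA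
  set cB : ℝ := (Real.sqrt ((2 * π) ^ 3 * B.det))⁻¹ with hcB
  have hcA0 : 0 < cA := by rw [hcA]; positivity
  have hcB0 : 0 < cB := by rw [hcB]; positivity
  set QA : Matrix (Fin 3) (Fin 3) ℝ := (1/2 : ℝ) • A⁻¹ with hQA
  set QB : Matrix (Fin 3) (Fin 3) ℝ := (1/2 : ℝ) • B⁻¹ with hQB
  have hQApd : QA.PosDef := posDef_smul_pos hA.inv (by norm_num)
  have hQBpd : QB.PosDef := posDef_smul_pos hB.inv (by norm_num)
  have hQpd : (QA + QB).PosDef := hQApd.add hQBpd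
  set M : Matrix (Fin 3) (Fin 3) ℝ := (1/2 : ℝ) • (A + B) with hM
  have hMpd : M.PosDef := posDef_smul_pos (hA.add hB) (by norm_num)
  have hdM : 0 < M.det := hMpd.det_pos
  have hdQ : 0 < (QA + QB).det := hQpd.det_pos
  -- pointwise form of the densities
  have hpA : ∀ x : Fin 3 → ℝ, gaussDensity3 A x
      = cA * Real.exp (-(x ⬝ᵥ A⁻¹ *ᵥ x) / 2) := by
    intro x; rw [gaussDensity3, quad_sum_eq]
  have hpB : ∀ x : Fin 3 → ℝ, gaussDensity3 B x
      = cB * Real.exp (-(x ⬝ᵥ B⁻¹ *ᵥ x) / 2) := by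
    intro x; rw [gaussDensity3, quad_sum_eq]
  have hsA : ∀ x : Fin 3 → ℝ, Real.sqrt (gaussDensity3 A x)
      = Real.sqrt cA * Real.exp (-(x ⬝ᵥ QA *ᵥ x) / 2) := by
    intro x
    rw [hpA x, Real.sqrt_mul hcA0.le, ← Real.exp_half, hQA, quad_smul_half]
    ring_nf
  have hsB : ∀ x : Fin 3 → ℝ, Real.sqrt (gaussDensity3 B x)
      = Real.sqrt cB * Real.exp (-(x ⬝ᵥ QB *ᵥ x) / 2) := by
    intro x
    rw [hpB x, Real.sqrt_mul hcB0.le, ← Real.exp_half, hQB, quad_smul_half]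
    ring_nf
  -- expand the square
  have hexpand : ∀ x : Fin 3 → ℝ,
      (Real.sqrt (gaussDensity3 A x) - Real.sqrt (gaussDensity3 B x)) ^ 2
        = cA * Real.exp (-(x ⬝ᵥ A⁻¹ *ᵥ x) / 2) + cB * Real.exp (-(x ⬝ᵥ B⁻¹ *ᵥ x) / 2)
          - 2 * (Real.sqrt cA * Real.sqrt cB * Real.exp (-(x ⬝ᵥ (QA + QB) *ᵥ x) / 2)) := by
    intro x
    rw [hsA x, hsB x]
    have h1 : x ⬝ᵥ (QA + QB) *ᵥ x = x ⬝ᵥ QA *ᵥ x + x ⬝ᵥ QB *ᵥ x := by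
      rw [Matrix.add_mulVec, dotProduct_add]
    have h2 : -(x ⬝ᵥ A⁻¹ *ᵥ x) / 2
        = -(x ⬝ᵥ QA *ᵥ x) / 2 + -(x ⬝ᵥ QA *ᵥ x) / 2 := by
      rw [hQA, quad_smul_half]; ring
    have h3 : -(x ⬝ᵥ B⁻¹ *ᵥ x) / 2
        = -(x ⬝ᵥ QB *ᵥ x) / 2 + -(x ⬝ᵥ QB *ᵥ x) / 2 := by
      rw [hQB, quad_smul_half]; ring
    have h4 : -(x ⬝ᵥ (QA + QB) *ᵥ x) / 2
        = -(x ⬝ᵥ QA *ᵥ x) / 2 + -(x ⬝ᵥ QB *ᵥ x) / 2 := by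
      rw [h1]; ring
    rw [h2, h3, h4, Real.exp_add, Real.exp_add, Real.exp_add, sub_sq, mul_pow, mul_pow,
      Real.sq_sqrt hcA0.le, Real.sq_sqrt hcB0.le]
    ring
  -- integrability
  have giA := gauss3 hA.inv
  have giB := gauss3 hB.inv
  have giQ := gauss3 hQpd
  have intA : Integrable (fun x : Fin 3 → ℝ => cA * Real.exp (-(x ⬝ᵥ A⁻¹ *ᵥ x) / 2)) :=
    giA.1.const_mul cA
  have intB : Integrable (fun x : Fin 3 → ℝ => cB * Real.exp (-(x ⬝ᵥ B⁻¹ *ᵥ x) / 2)) :=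
    giB.1.const_mul cB
  have intX : Integrable (fun x : Fin 3 → ℝ =>
      2 * (Real.sqrt cA * Real.sqrt cB * Real.exp (-(x ⬝ᵥ (QA + QB) *ᵥ x) / 2))) :=
    (giQ.1.const_mul (Real.sqrt cA * Real.sqrt cB)).const_mul 2
  -- compute the three integrals
  have hAinvdet : A⁻¹.det = A.det⁻¹ := by rw [Matrix.det_nonsing_inv, Ring.inverse_eq_inv']
  have hBinvdet : B⁻¹.det = B.det⁻¹ := by rw [Matrix.det_nonsing_inv, Ring.inverse_eq_inv']
  have hIA : ∫ x : Fin 3 → ℝ, cA * Real.exp (-(x ⬝ᵥ A⁻¹ *ᵥ x) / 2) = 1 := by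
    rw [integral_const_mul, giA.2, hAinvdet,
      show (2 * π) ^ 3 / A.det⁻¹ = (2 * π) ^ 3 * A.det by
        field_simp
      , hcA]
    exact inv_mul_cancel₀ (by positivity)
  have hIB : ∫ x : Fin 3 → ℝ, cB * Real.exp (-(x ⬝ᵥ B⁻¹ *ᵥ x) / 2) = 1 := by
    rw [integral_const_mul, giB.2, hBinvdet,
      show (2 * π) ^ 3 / B.det⁻¹ = (2 * π) ^ 3 * B.det by
        field_simp
      , hcB]
    exact inv_mul_cancel₀ (by positivity)
  set K : ℝ := Real.sqrt cA * Real.sqrt cB * Real.sqrt ((2 * π) ^ 3 / (QA + QB).det) with hK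
  have hIX : ∫ x : Fin 3 → ℝ,
      2 * (Real.sqrt cA * Real.sqrt cB * Real.exp (-(x ⬝ᵥ (QA + QB) *ᵥ x) / 2)) = 2 * K := by
    rw [integral_const_mul, integral_const_mul, giQ.2, hK]
  -- put the integral together
  have hint : hellingerSqGauss3 A B = 1 - K := by
    rw [hellingerSqGauss3]
    rw [integral_congr_ae (Filter.Eventually.of_forall hexpand)]
    have intAB : Integrable (fun x : Fin 3 → ℝ =>
        cA * Real.exp (-(x ⬝ᵥ A⁻¹ *ᵥ x) / 2) + cB * Real.exp (-(x ⬝ᵥ B⁻¹ *ᵥ x) / 2)) :=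
      intA.add intB
    rw [integral_sub intAB intX, integral_add intA intB, hIA, hIB, hIX]
    ring
  rw [hint]
  -- identify K with the determinant expression
  have hdetQ : (QA + QB).det = A.det⁻¹ * M.det * B.det⁻¹ := by
    have hAB : A⁻¹ * M * B⁻¹ = QA + QB := by
      rw [hM, Matrix.mul_smul, Matrix.smul_mul, Matrix.mul_add, Matrix.add_mul,
        Matrix.nonsing_inv_mul A hAu, Matrix.mul_assoc, Matrix.mul_nonsing_inv B hBu,
        Matrix.mul_one, Matrix.one_mul, hQA, hQB, smul_add, add_comm]
    rw [← hAB, Matrix.det_mul, Matrix.det_mul, hAinvdet, hBinvdet]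
  set R : ℝ := A.det ^ ((1 : ℝ) / 4) * B.det ^ ((1 : ℝ) / 4) / Real.sqrt (M.det) with hR
  have hK0 : 0 ≤ K := by rw [hK]; positivity
  have hR0 : 0 ≤ R := by rw [hR]; positivity
  have hK4 : K ^ 4 = A.det * B.det / M.det ^ 2 := by
    have e1 : K ^ 2 = cA * cB * ((2 * π) ^ 3 / (QA + QB).det) := by
      rw [hK, mul_pow, mul_pow, Real.sq_sqrt hcA0.le, Real.sq_sqrt hcB0.le,
        Real.sq_sqrt (by positivity : (0:ℝ) ≤ (2 * π) ^ 3 / (QA + QB).det)]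
    have e2 : cA ^ 2 = ((2 * π) ^ 3 * A.det)⁻¹ := by
      rw [hcA, inv_pow, Real.sq_sqrt (by positivity)]
    have e3 : cB ^ 2 = ((2 * π) ^ 3 * B.det)⁻¹ := by
      rw [hcB, inv_pow, Real.sq_sqrt (by positivity)]
    have : K ^ 4 = (K ^ 2) ^ 2 := by ring
    rw [this, e1, mul_pow, mul_pow, e2, e3, div_pow, hdetQ]
    have hπ : (0:ℝ) < (2 * π) ^ 3 := by positivity
    field_simp
  have hR4 : R ^ 4 = A.det * B.det / M.det ^ 2 := by
    have e1 : (A.det ^ ((1 : ℝ) / 4)) ^ (4 : ℕ) = A.det := by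
      rw [← Real.rpow_natCast (A.det ^ ((1 : ℝ) / 4)) 4, ← Real.rpow_mul hdA.le]
      norm_num
    have e2 : (B.det ^ ((1 : ℝ) / 4)) ^ (4 : ℕ) = B.det := by
      rw [← Real.rpow_natCast (B.det ^ ((1 : ℝ) / 4)) 4, ← Real.rpow_mul hdB.le]
      norm_num
    have e3 : Real.sqrt M.det ^ (4 : ℕ) = M.det ^ 2 := by
      rw [show Real.sqrt M.det ^ (4:ℕ) = (Real.sqrt M.det ^ 2) ^ 2 by ring,
        Real.sq_sqrt hdM.le]
    rw [hR, div_pow, mul_pow, e1, e2, e3]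
  have : K = R := by
    have := hK4.trans hR4.symm
    exact (pow_left_inj₀ hK0 hR0 (by norm_num)).mp this
  rw [this, hR]


lemma sumsq_pos {x : Fin 3 → ℝ} (hx : x ≠ 0) : 0 < x 0 ^ 2 + x 1 ^ 2 + x 2 ^ 2 := by
  rcases Function.ne_iff.mp hx with ⟨i, hi⟩
  simp only [Pi.zero_apply] at hi
  fin_cases i
  · have h : x 0 ≠ 0 := hi
    nlinarith [pow_two_pos_of_ne_zero h, sq_nonneg (x 1), sq_nonneg (x 2)]
  · have h : x 1 ≠ 0 := hi
    nlinarith [pow_two_pos_of_ne_zero h, sq_nonneg (x 0), sq_nonneg (x 2)]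
  · have h : x 2 ≠ 0 := hi
    nlinarith [pow_two_pos_of_ne_zero h, sq_nonneg (x 0), sq_nonneg (x 1)]

lemma corr0_posDef {a b : ℝ} (ha : |a| < 1/4) (hb : |b| < 1/4) : (corr0 a b).PosDef := by
  obtain ⟨ha1, ha2⟩ := abs_lt.mp ha
  obtain ⟨hb1, hb2⟩ := abs_lt.mp hb
  refine posDef_iff_dotProduct_mulVec.mpr ⟨?_, ?_⟩
  · ext i j
    fin_cases i <;> fin_cases j <;>
      simp [corr0, Matrix.conjTranspose_apply]
  · intro x hx
    have hx' := sumsq_pos hx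
    simp [corr0, dotProduct, Matrix.mulVec, Fin.sum_univ_three]
    nlinarith [mul_nonneg (by linarith : (0:ℝ) ≤ 1/4 - a) (sq_nonneg (x 0 + x 2)),
      mul_nonneg (by linarith : (0:ℝ) ≤ 1/4 + a) (sq_nonneg (x 0 - x 2)),
      mul_nonneg (by linarith : (0:ℝ) ≤ 1/4 - b) (sq_nonneg (x 1 + x 2)),
      mul_nonneg (by linarith : (0:ℝ) ≤ 1/4 + b) (sq_nonneg (x 1 - x 2)),
      sq_nonneg (x 0), sq_nonneg (x 1), sq_nonneg (x 2)]

lemma corr1_posDef {a b : ℝ} (ha : |a| < 1/4) (hb : |b| < 1/4) : (corr1 a b).PosDef := by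
  obtain ⟨ha1, ha2⟩ := abs_lt.mp ha
  obtain ⟨hb1, hb2⟩ := abs_lt.mp hb
  have hab1 : a * b ≤ 1/16 := by nlinarith
  have hab2 : -(1/16) ≤ a * b := by nlinarith
  refine posDef_iff_dotProduct_mulVec.mpr ⟨?_, ?_⟩
  · ext i j
    fin_cases i <;> fin_cases j <;>
      simp [corr1, Matrix.conjTranspose_apply]
  · intro x hx
    have hx' := sumsq_pos hx
    simp [corr1, dotProduct, Matrix.mulVec, Fin.sum_univ_three]
    nlinarith [mul_nonneg (by linarith : (0:ℝ) ≤ 1/4 - a) (sq_nonneg (x 0 + x 2)),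
      mul_nonneg (by linarith : (0:ℝ) ≤ 1/4 + a) (sq_nonneg (x 0 - x 2)),
      mul_nonneg (by linarith : (0:ℝ) ≤ 1/4 - b) (sq_nonneg (x 1 + x 2)),
      mul_nonneg (by linarith : (0:ℝ) ≤ 1/4 + b) (sq_nonneg (x 1 - x 2)),
      mul_nonneg (by linarith : (0:ℝ) ≤ 1/16 - a*b) (sq_nonneg (x 0 + x 1)),
      mul_nonneg (by linarith : (0:ℝ) ≤ 1/16 + a*b) (sq_nonneg (x 0 - x 1)),
      sq_nonneg (x 0), sq_nonneg (x 1), sq_nonneg (x 2)]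

lemma det_corr0 (a b : ℝ) : (corr0 a b).det = 1 - a^2 - b^2 := by
  simp [corr0, Matrix.det_fin_three]
  ring

lemma det_corr1 (a b : ℝ) : (corr1 a b).det = (1 - a^2) * (1 - b^2) := by
  simp [corr1, Matrix.det_fin_three]
  ring

lemma det_avg (a b : ℝ) : ((1/2 : ℝ) • (corr0 a b + corr1 a b)).det
    = 1 - a^2 - b^2 + 3/4 * (a^2 * b^2) := by
  rw [Matrix.det_smul]
  simp [corr0, corr1, Matrix.det_fin_three, Matrix.add_apply, Fintype.card_fin]
  ring


set_option maxHeartbeats 1000000 in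
/-- `H²(P₀,P₁) = 1 - |Σ₀|^{1/4}|Σ₁|^{1/4}/|(Σ₀+Σ₁)/2|^{1/2}`, and as
`ρ₁₃, ρ₂₃ → 0` one has `H² = ρ₁₃²ρ₂₃²/8 + O(ρ₁₃⁴ + ρ₂₃⁴)`. -/
theorem hellinger_gaussian_pair :
    (∀ ρ₁₃ ρ₂₃ : ℝ, (corr0 ρ₁₃ ρ₂₃).PosDef → (corr1 ρ₁₃ ρ₂₃).PosDef →
      hellingerSqGauss3 (corr0 ρ₁₃ ρ₂₃) (corr1 ρ₁₃ ρ₂₃)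
        = 1 - (corr0 ρ₁₃ ρ₂₃).det ^ ((1 : ℝ) / 4) * (corr1 ρ₁₃ ρ₂₃).det ^ ((1 : ℝ) / 4)
            / Real.sqrt (((1 / 2 : ℝ) • (corr0 ρ₁₃ ρ₂₃ + corr1 ρ₁₃ ρ₂₃)).det))
    ∧ ∃ C > (0 : ℝ), ∃ ε > (0 : ℝ), ∀ ρ₁₃ ρ₂₃ : ℝ, |ρ₁₃| < ε → |ρ₂₃| < ε →
        |hellingerSqGauss3 (corr0 ρ₁₃ ρ₂₃) (corr1 ρ₁₃ ρ₂₃)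
            - ρ₁₃ ^ 2 * ρ₂₃ ^ 2 / 8|
          ≤ C * (ρ₁₃ ^ 4 + ρ₂₃ ^ 4) := by
  constructor
  · intro ρ₁₃ ρ₂₃ h0 h1
    exact hellinger_formula h0 h1
  · refine ⟨3, by norm_num, 1/4, by norm_num, ?_⟩
    intro a b ha hb
    have h0 := corr0_posDef ha hb
    have h1 := corr1_posDef ha hb
    obtain ⟨ha1, ha2⟩ := abs_lt.mp ha
    obtain ⟨hb1, hb2⟩ := abs_lt.mp hb
    have hu : a^2 ≤ 1/16 := by nlinarith
    have hv : b^2 ≤ 1/16 := by nlinarith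
    have hw : 0 ≤ a^2*b^2 := mul_nonneg (sq_nonneg a) (sq_nonneg b)
    rw [hellinger_formula h0 h1, det_corr0, det_corr1, det_avg]
    clear h0 h1 ha hb
    set d0 : ℝ := 1 - a^2 - b^2 with hd0def
    set d1 : ℝ := (1 - a^2) * (1 - b^2) with hd1def
    set m : ℝ := 1 - a^2 - b^2 + 3/4 * (a^2 * b^2) with hmdef
    have hd0 : 0 < d0 := by rw [hd0def]; nlinarith
    have hd1 : 0 < d1 := by rw [hd1def]; nlinarith
    have hd0le : d0 ≤ 1 := by rw [hd0def]; nlinarith [sq_nonneg a, sq_nonneg b]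
    have hm78 : (7:ℝ)/8 ≤ m := by rw [hmdef]; nlinarith
    clear_value d0 d1 m
    have hm : 0 < m := by linarith
    set R : ℝ := d0 ^ ((1:ℝ)/4) * d1 ^ ((1:ℝ)/4) / Real.sqrt m with hRdef
    have hR0 : 0 ≤ R := by
      rw [hRdef]
      exact div_nonneg (mul_nonneg (Real.rpow_nonneg hd0.le _) (Real.rpow_nonneg hd1.le _))
        (Real.sqrt_nonneg m)
    have hR4 : R^4 = d0 * d1 / m^2 := by
      have e1 : (d0 ^ ((1 : ℝ) / 4)) ^ (4 : ℕ) = d0 := by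
        rw [← Real.rpow_natCast (d0 ^ ((1 : ℝ) / 4)) 4, ← Real.rpow_mul hd0.le]; norm_num
      have e2 : (d1 ^ ((1 : ℝ) / 4)) ^ (4 : ℕ) = d1 := by
        rw [← Real.rpow_natCast (d1 ^ ((1 : ℝ) / 4)) 4, ← Real.rpow_mul hd1.le]; norm_num
      have e3 : Real.sqrt m ^ (4 : ℕ) = m ^ 2 := by
        rw [show Real.sqrt m ^ (4:ℕ) = (Real.sqrt m ^ 2) ^ 2 by ring, Real.sq_sqrt hm.le]
      rw [hRdef, div_pow, mul_pow, e1, e2, e3]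
    clear_value R
    have hm2 : 0 < m^2 := by positivity
    have hm2R : m^2 * R^4 = d0 * d1 := by
      rw [hR4]; field_simp
    have key0 : m^2 - d0*d1 = 1/2 * d0 * (a^2*b^2) + 9/16 * (a^2*b^2)^2 := by
      rw [hd0def, hd1def, hmdef]; ring
    have hDle : d0 * d1 ≤ m^2 := by
      nlinarith [key0, mul_nonneg hd0.le hw, sq_nonneg (a^2*b^2)]
    have hR41 : R^4 ≤ 1 := by nlinarith [hm2R, hDle, hm2]
    have hR1 : R ≤ 1 := (pow_le_one_iff_of_nonneg hR0 (by norm_num : (4:ℕ) ≠ 0)).mp hR41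
    have hR4R : R^4 ≤ R := by
      have h3 : R^3 ≤ 1 := pow_le_one₀ hR0 hR1
      calc R^4 = R^3 * R := by ring
      _ ≤ 1 * R := by exact mul_le_mul_of_nonneg_right h3 hR0
      _ = R := one_mul R
    have hm2' : (49:ℝ)/64 ≤ m^2 := by linarith [hm78, sq_nonneg (m - 7/8)]
    have huv : a^2*b^2 ≤ 1/256 := by nlinarith [hu, hv, sq_nonneg a, sq_nonneg b]
    have hfac : 0 ≤ m^2 - 1/2 * d0 - 9/16 * (a^2*b^2) := by linarith [hm2', hd0le, huv]
    have hkey : m^2 - d0*d1 ≤ a^2*b^2 * m^2 := by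
      linarith [key0, mul_nonneg hw hfac]
    have h14 : 1 - R^4 ≤ a^2*b^2 := by nlinarith [hm2R, hkey, hm2]
    have hAM : 2*(a^2*b^2) ≤ a^4 + b^4 := by nlinarith [sq_nonneg (a^2 - b^2)]
    have h1R : 1 - R ≤ a^2*b^2 := by linarith
    have hnn4 : 0 ≤ a^4 + b^4 := by positivity
    rw [abs_le]
    constructor
    · nlinarith [hR1, hw, hnn4, hAM]
    · nlinarith [h1R, hAM, hnn4]
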